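/- arXiv:2309.00953 — 2 statements merged into one kernel-verified Lean document; each statement's English description precedes it below -/
import Mathlib

section
/- Fractional integration by parts: for smooth functions ρ, φ : [0,T] → ℝ, ∫₀^T φ(t) ∂ₜ^α ρ(t) dt = ∫₀^T ρ(t) ∂̂ₜ^α φ(t) dt − ρ(0) · ₀Î_T^{1−α} φ, where ∂ₜ^α is the forward Caputo derivative, ∂̂ₜ^α φ(t) := −∂ₜ[(1/Γ(1−α)) ∫ₜ^T (s−t)^{−α} φ(s) ds] is the backward Riemann–Liouville derivative, and ₀Î_T^{1−α} φ := (1/Γ(1−α)) ∫₀^T s^{−α} φ(s) ds. -/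
open MeasureTheory intervalIntegral Real Set

/-- Forward Caputo fractional derivative of order `α`. -/
noncomputable def caputoDeriv (α : ℝ) (g : ℝ → ℝ) (t : ℝ) : ℝ :=
  (1 / Real.Gamma (1 - α)) * ∫ s in (0:ℝ)..t, (t - s) ^ (-α) * deriv g s

/-- Backward Riemann–Liouville fractional integral `ₜÎ_T^{1−α} φ`. -/
noncomputable def backRLIntegral (α T : ℝ) (φ : ℝ → ℝ) (t : ℝ) : ℝ :=
  (1 / Real.Gamma (1 - α)) * ∫ s in t..T, (s - t) ^ (-α) * φ s

/-- Backward Riemann–Liouville fractional derivative `∂̂ₜ^α φ`. -/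
noncomputable def backRLDeriv (α T : ℝ) (φ : ℝ → ℝ) (t : ℝ) : ℝ :=
  -deriv (backRLIntegral α T φ) t


lemma kernel_int (α s a b : ℝ) (hα1 : α < 1) :
    IntervalIntegrable (fun t => (t - s) ^ (-α)) volume a b := by
  have h := intervalIntegral.intervalIntegrable_rpow' (a := a - s) (b := b - s) (r := -α) (by linarith)
  simpa using h.comp_sub_right s

lemma kernel_val (α s T : ℝ) (hα1 : α < 1) :
    ∫ t in s..T, (t - s) ^ (-α) = (T - s) ^ (1 - α) / (1 - α) := by
  rw [show (fun t => (t - s) ^ (-α)) = fun t => ((fun u => u ^ (-α)) (t - s)) from rfl]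
  rw [intervalIntegral.integral_comp_sub_right (fun u => u ^ (-α)) s]
  rw [integral_rpow (Or.inl (by linarith))]
  have h0 : (s - s : ℝ) ^ (-α + 1) = 0 := by
    rw [sub_self]; exact Real.zero_rpow (by linarith)
  rw [h0, show -α + 1 = 1 - α by ring]
  ring

lemma fubini_tri {α T : ℝ} (hα0 : 0 < α) (hα1 : α < 1) (hT : 0 < T)
    {f g : ℝ → ℝ} (hf : ContinuousOn f (Set.Icc 0 T)) (hg : ContinuousOn g (Set.Icc 0 T)) :
    ∫ t in (0:ℝ)..T, g t * ∫ s in (0:ℝ)..t, (t - s) ^ (-α) * f s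
      = ∫ s in (0:ℝ)..T, f s * ∫ t in s..T, (t - s) ^ (-α) * g t := by
  obtain ⟨Mf, hMf⟩ := (isCompact_Icc (a := (0:ℝ)) (b := T)).exists_bound_of_continuousOn hf
  obtain ⟨Mg, hMg⟩ := (isCompact_Icc (a := (0:ℝ)) (b := T)).exists_bound_of_continuousOn hg
  have hMf0 : 0 ≤ Mf := le_trans (norm_nonneg _) (hMf 0 ⟨le_refl _, hT.le⟩)
  have hMg0 : 0 ≤ Mg := le_trans (norm_nonneg _) (hMg 0 ⟨le_refl _, hT.le⟩)
  set μ : Measure ℝ := volume.restrict (Ioc 0 T) with hμ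
  set G : ℝ × ℝ → ℝ := fun p => (p.2 - p.1) ^ (-α) * f p.1 * g p.2 with hG
  set Fn : ℝ × ℝ → ℝ := ({p : ℝ × ℝ | p.1 < p.2}).indicator G with hFn
  -- measurability
  have hprod : μ.prod μ = (volume.prod volume).restrict (Ioc 0 T ×ˢ Ioc 0 T) :=
    Measure.prod_restrict _ _
  have hGm : AEStronglyMeasurable G (μ.prod μ) := by
    rw [hprod]
    have h1 : Measurable fun p : ℝ × ℝ => (p.2 - p.1) ^ (-α) :=
      (measurable_snd.sub measurable_fst).pow_const _
    have hfm : AEStronglyMeasurable (fun p : ℝ × ℝ => f p.1)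
        ((volume.prod volume).restrict (Ioc 0 T ×ˢ Ioc 0 T)) := by
      apply ContinuousOn.aestronglyMeasurable _ (measurableSet_Ioc.prod measurableSet_Ioc)
      exact hf.comp continuous_fst.continuousOn
        (fun p hp => Ioc_subset_Icc_self hp.1)
    have hgm : AEStronglyMeasurable (fun p : ℝ × ℝ => g p.2)
        ((volume.prod volume).restrict (Ioc 0 T ×ˢ Ioc 0 T)) := by
      apply ContinuousOn.aestronglyMeasurable _ (measurableSet_Ioc.prod measurableSet_Ioc)
      exact hg.comp continuous_snd.continuousOn
        (fun p hp => Ioc_subset_Icc_self hp.2)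
    exact (h1.aestronglyMeasurable.mul hfm).mul hgm
  have hFm : AEStronglyMeasurable Fn (μ.prod μ) :=
    hGm.indicator (measurableSet_lt measurable_fst measurable_snd)
  -- slice integrability and bound
  have hkint : ∀ s : ℝ, s ≤ T → IntegrableOn (fun t => (t - s) ^ (-α)) (Ioc s T) volume := by
    intro s hsT
    rw [← intervalIntegrable_iff_integrableOn_Ioc_of_le hsT]
    exact kernel_int α s s T hα1
  have sliceBound : ∀ s ∈ Ioc (0:ℝ) T, ∀ t ∈ Ioc s T,
      ‖G (s, t)‖ ≤ Mf * Mg * (t - s) ^ (-α) := by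
    intro s hs t ht
    have h1 : ‖G (s, t)‖ = (t - s) ^ (-α) * (‖f s‖ * ‖g t‖) := by
      simp only [hG, norm_mul, Real.norm_eq_abs]
      rw [abs_of_nonneg (Real.rpow_nonneg (by linarith [ht.1]) _)]
      ring
    rw [h1]
    have h2 : ‖f s‖ * ‖g t‖ ≤ Mf * Mg := by
      apply mul_le_mul (hMf s ⟨hs.1.le, hs.2⟩)
        (hMg t ⟨by linarith [hs.1, ht.1], ht.2⟩) (norm_nonneg _) hMf0
    have h3 : (0:ℝ) ≤ (t - s) ^ (-α) := Real.rpow_nonneg (by linarith [ht.1]) _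
    nlinarith
  have sliceInt : ∀ s ∈ Ioc (0:ℝ) T, IntegrableOn (fun t => G (s, t)) (Ioc s T) volume := by
    intro s hs
    apply Integrable.mono' (((hkint s hs.2).const_mul (Mf * Mg)))
    · apply AEStronglyMeasurable.mul
      · have hm : Measurable fun t : ℝ => (t - s) ^ (-α) * f s :=
          ((measurable_id'.sub_const s).pow_const _).mul_const _
        exact hm.aestronglyMeasurable
      · exact (hg.mono (fun t ht => ⟨by linarith [hs.1, ht.1], ht.2⟩)).aestronglyMeasurable
          measurableSet_Ioc
    · rw [ae_restrict_iff' measurableSet_Ioc]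
      filter_upwards with t ht
      exact sliceBound s hs t ht
  have hsetR : ∀ s ∈ Ioc (0:ℝ) T, Ioi s ∩ Ioc 0 T = Ioc s T := by
    intro s hs
    ext x
    simp only [mem_inter_iff, mem_Ioi, mem_Ioc]
    constructor
    · rintro ⟨h1, _, h3⟩; exact ⟨h1, h3⟩
    · rintro ⟨h1, h2⟩; exact ⟨h1, lt_trans hs.1 h1, h2⟩
  have hsliceR : ∀ s : ℝ, (fun t => Fn (s, t)) = (Ioi s).indicator (fun t => G (s, t)) := by
    intro s; ext t
    simp only [hFn, Set.indicator_apply, Set.mem_setOf_eq, mem_Ioi]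
  have hint : Integrable Fn (μ.prod μ) := by
    rw [integrable_prod_iff hFm]
    constructor
    · rw [ae_restrict_iff' measurableSet_Ioc]
      filter_upwards with s hs
      rw [hsliceR s, integrable_indicator_iff measurableSet_Ioi]
      rw [IntegrableOn, hμ, Measure.restrict_restrict measurableSet_Ioi, hsetR s hs]
      exact sliceInt s hs
    · apply Integrable.mono' (integrable_const (Mf * Mg * (T ^ (1 - α) / (1 - α))))
        (hFm.norm.integral_prod_right')
      rw [ae_restrict_iff' measurableSet_Ioc]
      filter_upwards with s hs
      have hnn : 0 ≤ ∫ t, ‖Fn (s, t)‖ ∂μ := integral_nonneg fun t => norm_nonneg _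
      rw [Real.norm_of_nonneg hnn]
      have hmaj : IntegrableOn ((Ioi s).indicator fun t => Mf * Mg * (t - s) ^ (-α))
          (Ioc 0 T) volume := by
        rw [IntegrableOn, integrable_indicator_iff measurableSet_Ioi, IntegrableOn,
          Measure.restrict_restrict measurableSet_Ioi, hsetR s hs]
        exact (hkint s hs.2).const_mul (Mf * Mg)
      have step1 : ∫ t, ‖Fn (s, t)‖ ∂μ
          ≤ ∫ t, (Ioi s).indicator (fun t => Mf * Mg * (t - s) ^ (-α)) t ∂μ := by
        apply integral_mono_of_nonneg (Filter.Eventually.of_forall fun t => norm_nonneg _) hmaj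
        have hb : ∀ᵐ t ∂(volume : Measure ℝ), t ∈ Ioc (0:ℝ) T →
            ‖Fn (s, t)‖ ≤ (Ioi s).indicator (fun t => Mf * Mg * (t - s) ^ (-α)) t := by
          filter_upwards with t ht
          rw [congrFun (hsliceR s) t]
          by_cases hst : s < t
          · rw [Set.indicator_of_mem (mem_Ioi.2 hst), Set.indicator_of_mem (mem_Ioi.2 hst)]
            exact sliceBound s hs t ⟨hst, ht.2⟩
          · rw [Set.indicator_of_notMem (fun h => hst (mem_Ioi.1 h)),
              Set.indicator_of_notMem (fun h => hst (mem_Ioi.1 h))]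
            simp
        exact ((ae_restrict_iff' measurableSet_Ioc).2 hb : _)
      refine le_trans step1 ?_
      rw [hμ, setIntegral_indicator measurableSet_Ioi, inter_comm, hsetR s hs,
        ← intervalIntegral.integral_of_le hs.2, intervalIntegral.integral_const_mul,
        kernel_val α s T hα1]
      have h4 : (T - s) ^ (1 - α) ≤ T ^ (1 - α) :=
        Real.rpow_le_rpow (by linarith [hs.2]) (by linarith [hs.1]) (by linarith)
      have h5 : (0:ℝ) < 1 - α := by linarith
      have h6 : 0 ≤ Mf * Mg := mul_nonneg hMf0 hMg0
      gcongr
  -- swap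
  have swap : ∫ s, (∫ t, Fn (s, t) ∂μ) ∂μ = ∫ t, (∫ s, Fn (s, t) ∂μ) ∂μ :=
    integral_integral_swap (f := fun s t => Fn (s, t)) hint
  -- identify sides
  have hR : ∀ s ∈ Ioc (0:ℝ) T,
      (∫ t, Fn (s, t) ∂μ) = f s * ∫ t in s..T, (t - s) ^ (-α) * g t := by
    intro s hs
    rw [hsliceR s, hμ, setIntegral_indicator measurableSet_Ioi, inter_comm, hsetR s hs,
      ← intervalIntegral.integral_of_le hs.2]
    have : ∀ t : ℝ, G (s, t) = f s * ((t - s) ^ (-α) * g t) := fun t => by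
      simp only [hG]; ring
    simp only [this]
    rw [intervalIntegral.integral_const_mul]
  have hL : ∀ t ∈ Ioc (0:ℝ) T,
      (∫ s, Fn (s, t) ∂μ) = g t * ∫ s in (0:ℝ)..t, (t - s) ^ (-α) * f s := by
    intro t ht
    have hslice : (fun s => Fn (s, t)) = (Iio t).indicator (fun s => G (s, t)) := by
      ext s; simp only [hFn, Set.indicator_apply, Set.mem_setOf_eq, mem_Iio]
    have hsetL : Ioc 0 T ∩ Iio t = Ioo 0 t := by
      ext x
      simp only [mem_inter_iff, mem_Ioc, mem_Iio, mem_Ioo]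
      constructor
      · rintro ⟨⟨h1, _⟩, h3⟩; exact ⟨h1, h3⟩
      · rintro ⟨h1, h2⟩; exact ⟨⟨h1, by linarith [ht.2]⟩, h2⟩
    rw [hslice, hμ, setIntegral_indicator measurableSet_Iio, hsetL,
      ← integral_Ioc_eq_integral_Ioo, ← intervalIntegral.integral_of_le ht.1.le]
    have : ∀ s : ℝ, G (s, t) = g t * ((t - s) ^ (-α) * f s) := fun s => by
      simp only [hG]; ring
    simp only [this]
    rw [intervalIntegral.integral_const_mul]
  calc ∫ t in (0:ℝ)..T, g t * ∫ s in (0:ℝ)..t, (t - s) ^ (-α) * f s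
      = ∫ t in Ioc (0:ℝ) T, g t * ∫ s in (0:ℝ)..t, (t - s) ^ (-α) * f s :=
        intervalIntegral.integral_of_le hT.le
    _ = ∫ t, (∫ s, Fn (s, t) ∂μ) ∂μ :=
        (setIntegral_congr_fun measurableSet_Ioc (fun t ht => (hL t ht))).symm
    _ = ∫ s, (∫ t, Fn (s, t) ∂μ) ∂μ := swap.symm
    _ = ∫ s in Ioc (0:ℝ) T, f s * ∫ t in s..T, (t - s) ^ (-α) * g t :=
        setIntegral_congr_fun measurableSet_Ioc (fun s hs => (hR s hs))
    _ = ∫ s in (0:ℝ)..T, f s * ∫ t in s..T, (t - s) ^ (-α) * g t :=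
        (intervalIntegral.integral_of_le hT.le).symm


lemma rpow_int (α : ℝ) (hα1 : α < 1) :
    IntervalIntegrable (fun v : ℝ => v ^ (-α)) volume 0 1 :=
  intervalIntegral.intervalIntegrable_rpow' (by linarith)

/-- substitution: the backward kernel integral over `[t,T]` rescaled to `[0,1]`. -/
lemma backRL_rep {α T : ℝ} (hα1 : α < 1) (φ : ℝ → ℝ)
    {t : ℝ} (htT : t ≤ T) :
    ∫ s in t..T, (s - t) ^ (-α) * φ s
      = (T - t) ^ (1 - α) * ∫ v in (0:ℝ)..1, v ^ (-α) * φ (t + (T - t) * v) := by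
  rcases eq_or_lt_of_le htT with rfl | hlt
  · simp [sub_self, Real.zero_rpow (show (1:ℝ) - α ≠ 0 by linarith)]
  · set b := T - t with hb
    have hb0 : 0 < b := by simp [hb]; linarith
    have step1 : ∫ s in t..T, (s - t) ^ (-α) * φ s
        = ∫ u in (0:ℝ)..b, u ^ (-α) * φ (u + t) := by
      have := intervalIntegral.integral_comp_add_right
        (a := (0:ℝ)) (b := b) (fun s => (s - t) ^ (-α) * φ s) t
      simp only [zero_add] at this
      rw [show b + t = T by simp [hb]] at this
      rw [← this]
      congr 1
      ext u
      simp [add_sub_cancel_right]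
    have step2 : b * (∫ v in (0:ℝ)..1, (b * v) ^ (-α) * φ (b * v + t))
        = ∫ u in (0:ℝ)..b, u ^ (-α) * φ (u + t) := by
      have := intervalIntegral.mul_integral_comp_mul_left
        (a := (0:ℝ)) (b := 1) (c := b) (f := fun u => u ^ (-α) * φ (u + t))
      simpa using this
    have step3 : (∫ v in (0:ℝ)..1, (b * v) ^ (-α) * φ (b * v + t))
        = b ^ (-α) * ∫ v in (0:ℝ)..1, v ^ (-α) * φ (t + b * v) := by
      rw [← intervalIntegral.integral_const_mul]
      apply intervalIntegral.integral_congr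
      intro v hv
      rw [uIcc_of_le zero_le_one] at hv
      show (b * v) ^ (-α) * φ (b * v + t) = b ^ (-α) * (v ^ (-α) * φ (t + b * v))
      rw [Real.mul_rpow hb0.le hv.1, add_comm (b * v) t]
      ring
    rw [step1, ← step2, step3]
    rw [show (1:ℝ) - α = 1 + (-α) by ring, Real.rpow_add hb0, Real.rpow_one]
    ring

lemma aff_mem_Icc {T : ℝ} (hT : 0 < T) {x v : ℝ} (hx : x ∈ Icc (0:ℝ) T)
    (hv : v ∈ Icc (0:ℝ) 1) : x + (T - x) * v ∈ Icc (0:ℝ) T :=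
  ⟨by nlinarith [hx.1, hx.2, hv.1, hv.2], by nlinarith [hx.1, hx.2, hv.1, hv.2]⟩

lemma aff_mem_Ioo {T : ℝ} {x v : ℝ} (hx : x ∈ Ioo (0:ℝ) T)
    (hv : v ∈ Ioo (0:ℝ) 1) : x + (T - x) * v ∈ Ioo (0:ℝ) T :=
  ⟨by nlinarith [hx.1, hx.2, hv.1, hv.2], by nlinarith [hx.1, hx.2, hv.1, hv.2]⟩

lemma meas_slice {α T : ℝ} {φ : ℝ → ℝ} (hT : 0 < T) (hφ : ContinuousOn φ (Icc 0 T))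
    {x : ℝ} (hx : x ∈ Icc (0:ℝ) T) :
    AEStronglyMeasurable (fun v : ℝ => v ^ (-α) * φ (x + (T - x) * v))
      (volume.restrict (Ioc 0 1)) := by
  apply AEStronglyMeasurable.mul
  · exact (measurable_id'.pow_const (-α)).aestronglyMeasurable
  · apply ContinuousOn.aestronglyMeasurable _ measurableSet_Ioc
    apply hφ.comp (Continuous.continuousOn (by continuity))
    intro v hv
    exact aff_mem_Icc hT hx (Ioc_subset_Icc_self hv)

lemma Jcont {α T : ℝ} {φ : ℝ → ℝ} (hα1 : α < 1) (hT : 0 < T)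
    (hφ : ContinuousOn φ (Icc 0 T)) :
    ContinuousOn (fun t => ∫ v in (0:ℝ)..1, v ^ (-α) * φ (t + (T - t) * v)) (Icc 0 T) := by
  obtain ⟨M, hM⟩ := (isCompact_Icc (a := (0:ℝ)) (b := T)).exists_bound_of_continuousOn hφ
  have key : ContinuousOn
      (fun t => ∫ v in Ioc (0:ℝ) 1, v ^ (-α) * φ (t + (T - t) * v) ∂volume) (Icc 0 T) := by
    apply continuousOn_of_dominated (bound := fun v => v ^ (-α) * M)
    · intro x hx; exact meas_slice hT hφ hx
    · intro x hx
      rw [ae_restrict_iff' measurableSet_Ioc]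
      filter_upwards with v hv
      rw [norm_mul, Real.norm_eq_abs, Real.norm_eq_abs,
        abs_of_nonneg (Real.rpow_nonneg hv.1.le _)]
      exact mul_le_mul_of_nonneg_left
        (hM _ (aff_mem_Icc hT hx (Ioc_subset_Icc_self hv)))
        (Real.rpow_nonneg hv.1.le _)
    · rw [← IntegrableOn, ← intervalIntegrable_iff_integrableOn_Ioc_of_le zero_le_one]
      exact (rpow_int α hα1).mul_const M
    · rw [ae_restrict_iff' measurableSet_Ioc]
      filter_upwards with v hv
      apply ContinuousOn.mul continuousOn_const
      apply hφ.comp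
      · exact Continuous.continuousOn (by continuity)
      · intro x hx
        exact aff_mem_Icc hT hx (Ioc_subset_Icc_self hv)
  apply key.congr
  intro t _
  exact intervalIntegral.integral_of_le zero_le_one

lemma Jderiv {α T : ℝ} {φ : ℝ → ℝ} (hα1 : α < 1) (hT : 0 < T)
    (hφ : ContDiffOn ℝ 1 φ (Icc 0 T)) {Mφ Md : ℝ}
    (hMφ : ∀ y ∈ Icc (0:ℝ) T, ‖φ y‖ ≤ Mφ)
    (hMd : ∀ y ∈ Ioo (0:ℝ) T, ‖deriv φ y‖ ≤ Md)
    {x₀ : ℝ} (hx : x₀ ∈ Ioo (0:ℝ) T) :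
    HasDerivAt (fun t => ∫ v in (0:ℝ)..1, v ^ (-α) * φ (t + (T - t) * v))
      (∫ v in (0:ℝ)..1, v ^ (-α) * (deriv φ (x₀ + (T - x₀) * v) * (1 - v))) x₀ := by
  have hφc : ContinuousOn φ (Icc 0 T) := hφ.continuousOn
  set ε : ℝ := min x₀ (T - x₀) / 2 with hε
  have hε0 : 0 < ε := by
    have := hx.1; have := hx.2
    apply div_pos _ (by norm_num)
    apply lt_min <;> linarith
  have hball : Metric.ball x₀ ε ⊆ Ioo (0:ℝ) T := by
    intro x hxb
    rw [Metric.mem_ball, Real.dist_eq, abs_lt] at hxb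
    have h1 : ε ≤ x₀ / 2 := by
      rw [hε]; apply div_le_div_of_nonneg_right (min_le_left _ _) <;> norm_num
    have h2 : ε ≤ (T - x₀) / 2 := by
      rw [hε]; apply div_le_div_of_nonneg_right (min_le_right _ _) <;> norm_num
    constructor <;> [nlinarith [hx.1]; nlinarith [hx.2]]
  have hne1 : ∀ᵐ v : ℝ ∂volume, v ≠ 1 := by
    rw [ae_iff]
    have : {v : ℝ | ¬ v ≠ 1} = {1} := by ext v; simp
    rw [this]
    exact measure_singleton 1
  have key := intervalIntegral.hasDerivAt_integral_of_dominated_loc_of_deriv_le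
    (F := fun x v => v ^ (-α) * φ (x + (T - x) * v))
    (F' := fun x v => v ^ (-α) * (deriv φ (x + (T - x) * v) * (1 - v)))
    (bound := fun v => v ^ (-α) * Md) (a := 0) (b := 1) (x₀ := x₀) (μ := volume) (Metric.ball_mem_nhds x₀ hε0)
    ?_ ?_ ?_ ?_ ?_ ?_
  · exact key.2
  · -- hF_meas
    filter_upwards [isOpen_Ioo.mem_nhds hx] with x hx'
    rw [uIoc_of_le zero_le_one]
    exact meas_slice hT hφc (Ioo_subset_Icc_self hx')
  · -- hF_int
    rw [intervalIntegrable_iff_integrableOn_Ioc_of_le zero_le_one]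
    apply Integrable.mono'
      (g := fun v : ℝ => v ^ (-α) * Mφ)
      (by rw [← IntegrableOn, ← intervalIntegrable_iff_integrableOn_Ioc_of_le zero_le_one]
          exact (rpow_int α hα1).mul_const Mφ)
      (meas_slice hT hφc (Ioo_subset_Icc_self hx))
    rw [ae_restrict_iff' measurableSet_Ioc]
    filter_upwards with v hv
    rw [norm_mul, Real.norm_eq_abs (v ^ (-α)), abs_of_nonneg (Real.rpow_nonneg hv.1.le _)]
    exact mul_le_mul_of_nonneg_left
      (hMφ _ (aff_mem_Icc hT (Ioo_subset_Icc_self hx) (Ioc_subset_Icc_self hv)))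
      (Real.rpow_nonneg hv.1.le _)
  · -- hF'_meas
    apply Measurable.aestronglyMeasurable
    apply (measurable_id'.pow_const (-α)).mul
    apply Measurable.mul
    · exact (measurable_deriv φ).comp ((measurable_id'.const_mul _).const_add _)
    · exact measurable_const.sub measurable_id'
  · -- h_bound
    filter_upwards [hne1] with v hv1
    intro hv x hxb
    rw [uIoc_of_le zero_le_one] at hv
    have hvo : v ∈ Ioo (0:ℝ) 1 := ⟨hv.1, lt_of_le_of_ne hv.2 hv1⟩
    have hy := aff_mem_Ioo (hball hxb) hvo
    rw [norm_mul, Real.norm_eq_abs (v ^ (-α)), abs_of_nonneg (Real.rpow_nonneg hv.1.le _)]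
    apply mul_le_mul_of_nonneg_left _ (Real.rpow_nonneg hv.1.le _)
    rw [norm_mul]
    calc ‖deriv φ (x + (T - x) * v)‖ * ‖1 - v‖
        ≤ Md * 1 := by
          apply mul_le_mul (hMd _ hy) _ (norm_nonneg _)
            (le_trans (norm_nonneg _) (hMd _ hy))
          rw [Real.norm_eq_abs, abs_of_nonneg (by linarith [hvo.2])]
          linarith [hvo.1]
      _ = Md := mul_one Md
  · -- bound integrable
    exact (rpow_int α hα1).mul_const Md
  · -- h_diff
    filter_upwards [hne1] with v hv1
    intro hv x hxb
    rw [uIoc_of_le zero_le_one] at hv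
    have hvo : v ∈ Ioo (0:ℝ) 1 := ⟨hv.1, lt_of_le_of_ne hv.2 hv1⟩
    have hxo := hball hxb
    have hy := aff_mem_Ioo hxo hvo
    have haff : HasDerivAt (fun x : ℝ => x + (T - x) * v) (1 - v) x := by
      have h : (fun x : ℝ => x + (T - x) * v) = fun x => (1 - v) * x + T * v := by
        ext x; ring
      rw [h]
      simpa using ((hasDerivAt_id x).const_mul (1 - v)).add_const (T * v)
    have hφd : HasDerivAt φ (deriv φ (x + (T - x) * v)) (x + (T - x) * v) := by
      apply DifferentiableAt.hasDerivAt
      exact ((hφ.differentiableOn one_ne_zero) _ (Ioo_subset_Icc_self hy)).differentiableAt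
        (Icc_mem_nhds hy.1 hy.2)
    exact (hφd.comp x haff).const_mul _
lemma kernel_int2 (α T a b : ℝ) (hα1 : α < 1) :
    IntervalIntegrable (fun t => (T - t) ^ (-α)) volume a b := by
  have h := intervalIntegral.intervalIntegrable_rpow' (a := T - a) (b := T - b) (r := -α)
    (by linarith)
  simpa using h.comp_sub_left T

lemma Jbound_aux (α C : ℝ) (hα1 : α < 1) :
    ∫ v in (0:ℝ)..1, v ^ (-α) * C = C / (1 - α) := by
  rw [intervalIntegral.integral_mul_const, integral_rpow (Or.inl (by linarith))]
  rw [Real.one_rpow, Real.zero_rpow (by linarith : -α + 1 ≠ 0),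
    show -α + 1 = 1 - α by ring]
  ring

lemma ae_ne' (a : ℝ) : ∀ᵐ v : ℝ ∂volume, v ≠ a := by
  rw [ae_iff]
  have h : {v : ℝ | ¬ v ≠ a} = {a} := by ext v; simp
  rw [h]
  exact measure_singleton a

lemma backRL_hasDerivAt {α T : ℝ} {φ : ℝ → ℝ} (hα1 : α < 1) (hT : 0 < T)
    (hφ : ContDiffOn ℝ 1 φ (Set.Icc 0 T)) {Mφ Md : ℝ}
    (hMφ : ∀ y ∈ Icc (0:ℝ) T, ‖φ y‖ ≤ Mφ)
    (hMd : ∀ y ∈ Ioo (0:ℝ) T, ‖deriv φ y‖ ≤ Md)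
    {t : ℝ} (ht : t ∈ Ioo (0:ℝ) T) :
    HasDerivAt (backRLIntegral α T φ)
      ((1 / Real.Gamma (1 - α)) *
        ((T - t) ^ (1 - α) *
            (∫ v in (0:ℝ)..1, v ^ (-α) * (deriv φ (t + (T - t) * v) * (1 - v)))
          - (1 - α) * (T - t) ^ (-α) *
            (∫ v in (0:ℝ)..1, v ^ (-α) * φ (t + (T - t) * v)))) t := by
  have hTt : 0 < T - t := by linarith [ht.2]
  have h1 : HasDerivAt (fun x : ℝ => (T - x) ^ (1 - α))
      ((1 - α) * (T - t) ^ (1 - α - 1) * (-1)) t := by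
    have hb : HasDerivAt (fun x : ℝ => T - x) (-1) t := by
      simpa using (hasDerivAt_id t).const_sub T
    exact (Real.hasDerivAt_rpow_const (p := 1 - α) (Or.inl hTt.ne')).comp t hb
  have h2 := Jderiv hα1 hT hφ hMφ hMd ht
  have h3 := (h1.mul h2).const_mul (1 / Real.Gamma (1 - α))
  have h4 : HasDerivAt
      (fun x => (1 / Real.Gamma (1 - α)) *
        ((T - x) ^ (1 - α) * ∫ v in (0:ℝ)..1, v ^ (-α) * φ (x + (T - x) * v)))
      ((1 / Real.Gamma (1 - α)) *
        ((T - t) ^ (1 - α) *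
            (∫ v in (0:ℝ)..1, v ^ (-α) * (deriv φ (t + (T - t) * v) * (1 - v)))
          - (1 - α) * (T - t) ^ (-α) *
            (∫ v in (0:ℝ)..1, v ^ (-α) * φ (t + (T - t) * v)))) t := by
    refine HasDerivAt.congr_deriv h3 ?_
    rw [show (1:ℝ) - α - 1 = -α by ring]
    ring
  apply h4.congr_of_eventuallyEq
  filter_upwards [Icc_mem_nhds ht.1 ht.2] with x hx
  rw [backRLIntegral, backRL_rep hα1 φ hx.2]

theorem fractional_integration_by_parts
    (α T : ℝ) (hα0 : 0 < α) (hα1 : α < 1) (hT : 0 < T)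
    (ρ φ : ℝ → ℝ)
    (hρ : ContDiffOn ℝ 1 ρ (Set.Icc 0 T)) (hφ : ContDiffOn ℝ 1 φ (Set.Icc 0 T)) :
    ∫ t in (0:ℝ)..T, φ t * caputoDeriv α ρ t
      = (∫ t in (0:ℝ)..T, ρ t * backRLDeriv α T φ t)
        - ρ 0 * backRLIntegral α T φ 0 := by
  have h1α : (0:ℝ) < 1 - α := by linarith
  have hρc : ContinuousOn ρ (Icc 0 T) := hρ.continuousOn
  have hφc : ContinuousOn φ (Icc 0 T) := hφ.continuousOn
  have hUD : UniqueDiffOn ℝ (Icc (0:ℝ) T) := uniqueDiffOn_Icc hT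
  have hdρc : ContinuousOn (derivWithin ρ (Icc 0 T)) (Icc 0 T) :=
    hρ.continuousOn_derivWithin hUD le_rfl
  have hdφc : ContinuousOn (derivWithin φ (Icc 0 T)) (Icc 0 T) :=
    hφ.continuousOn_derivWithin hUD le_rfl
  obtain ⟨Mφ, hMφ⟩ := (isCompact_Icc (a := (0:ℝ)) (b := T)).exists_bound_of_continuousOn hφc
  obtain ⟨Md, hMd'⟩ := (isCompact_Icc (a := (0:ℝ)) (b := T)).exists_bound_of_continuousOn hdφc
  obtain ⟨Mρ, hMρ⟩ := (isCompact_Icc (a := (0:ℝ)) (b := T)).exists_bound_of_continuousOn hρc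
  have hMφ0 : 0 ≤ Mφ := le_trans (norm_nonneg _) (hMφ 0 ⟨le_refl _, hT.le⟩)
  have hMd0 : 0 ≤ Md := le_trans (norm_nonneg _) (hMd' 0 ⟨le_refl _, hT.le⟩)
  have hMρ0 : 0 ≤ Mρ := le_trans (norm_nonneg _) (hMρ 0 ⟨le_refl _, hT.le⟩)
  have hρd : ∀ t ∈ Ioo (0:ℝ) T, HasDerivAt ρ (deriv ρ t) t := fun t ht =>
    (((hρ.differentiableOn one_ne_zero) t (Ioo_subset_Icc_self ht)).differentiableAt
      (Icc_mem_nhds ht.1 ht.2)).hasDerivAt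
  have hdρ_eq : ∀ t ∈ Ioo (0:ℝ) T, derivWithin ρ (Icc 0 T) t = deriv ρ t := fun t ht =>
    (((hρ.differentiableOn one_ne_zero) t (Ioo_subset_Icc_self ht)).differentiableAt
      (Icc_mem_nhds ht.1 ht.2)).derivWithin (hUD t (Ioo_subset_Icc_self ht))
  have hdφ_eq : ∀ t ∈ Ioo (0:ℝ) T, derivWithin φ (Icc 0 T) t = deriv φ t := fun t ht =>
    (((hφ.differentiableOn one_ne_zero) t (Ioo_subset_Icc_self ht)).differentiableAt
      (Icc_mem_nhds ht.1 ht.2)).derivWithin (hUD t (Ioo_subset_Icc_self ht))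
  have hMd : ∀ y ∈ Ioo (0:ℝ) T, ‖deriv φ y‖ ≤ Md := fun y hy => by
    rw [← hdφ_eq y hy]; exact hMd' y (Ioo_subset_Icc_self hy)
  set J : ℝ → ℝ := fun t => ∫ v in (0:ℝ)..1, v ^ (-α) * φ (t + (T - t) * v) with hJdef
  set J1 : ℝ → ℝ :=
    fun t => ∫ v in (0:ℝ)..1, v ^ (-α) * (deriv φ (t + (T - t) * v) * (1 - v)) with hJ1def
  set I : ℝ → ℝ := backRLIntegral α T φ with hIdef
  set D : ℝ → ℝ := fun t => (1 / Real.Gamma (1 - α)) *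
    ((T - t) ^ (1 - α) * J1 t - (1 - α) * (T - t) ^ (-α) * J t) with hDdef
  -- representation and continuity of I
  have hIrep : ∀ t ∈ Icc (0:ℝ) T,
      I t = (1 / Real.Gamma (1 - α)) * ((T - t) ^ (1 - α) * J t) := by
    intro t ht
    rw [hIdef, backRLIntegral, backRL_rep hα1 φ ht.2]
  have hcont_pow : Continuous fun t : ℝ => (T - t) ^ (1 - α) := by
    have h : Continuous fun x : ℝ => x ^ (1 - α) :=
      continuous_iff_continuousAt.2 fun x => Real.continuousAt_rpow_const x _ (Or.inr h1α.le)
    exact h.comp (continuous_const.sub continuous_id)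
  have hJcont : ContinuousOn J (Icc 0 T) := Jcont hα1 hT hφc
  have hIcont : ContinuousOn I (Icc 0 T) :=
    (continuousOn_const.mul (hcont_pow.continuousOn.mul hJcont)).congr
      (fun t ht => hIrep t ht)
  have hIT : I T = 0 := by
    simp [hIdef, backRLIntegral]
  -- derivative of I
  have hIderiv : ∀ t ∈ Ioo (0:ℝ) T, HasDerivAt I (D t) t := fun t ht =>
    backRL_hasDerivAt hα1 hT hφ hMφ hMd ht
  have hderivI_eq : ∀ t ∈ Ioo (0:ℝ) T, deriv I t = D t := fun t ht =>
    (hIderiv t ht).deriv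
  -- bounds on J, J1, D
  have hJb : ∀ t ∈ Icc (0:ℝ) T, ‖J t‖ ≤ Mφ / (1 - α) := by
    intro t ht
    have hb := intervalIntegral.norm_integral_le_of_norm_le (μ := volume) (a := (0:ℝ)) (b := 1)
      (f := fun v => v ^ (-α) * φ (t + (T - t) * v)) (g := fun v => v ^ (-α) * Mφ)
      zero_le_one ?_ ((rpow_int α hα1).mul_const Mφ)
    · rw [Jbound_aux α Mφ hα1] at hb
      exact hb
    · filter_upwards with v hv
      rw [norm_mul, Real.norm_eq_abs (v ^ (-α)), abs_of_nonneg (Real.rpow_nonneg hv.1.le _)]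
      exact mul_le_mul_of_nonneg_left
        (hMφ _ (aff_mem_Icc hT ht (Ioc_subset_Icc_self hv)))
        (Real.rpow_nonneg hv.1.le _)
  have hJ1b : ∀ t ∈ Ioo (0:ℝ) T, ‖J1 t‖ ≤ Md / (1 - α) := by
    intro t ht
    have hb := intervalIntegral.norm_integral_le_of_norm_le (μ := volume) (a := (0:ℝ)) (b := 1)
      (f := fun v => v ^ (-α) * (deriv φ (t + (T - t) * v) * (1 - v)))
      (g := fun v => v ^ (-α) * Md)
      zero_le_one ?_ ((rpow_int α hα1).mul_const Md)
    · rw [Jbound_aux α Md hα1] at hb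
      exact hb
    · filter_upwards [ae_ne' 1] with v hv1 hv
      have hvo : v ∈ Ioo (0:ℝ) 1 := ⟨hv.1, lt_of_le_of_ne hv.2 hv1⟩
      have hy := aff_mem_Ioo ht hvo
      rw [norm_mul, Real.norm_eq_abs (v ^ (-α)), abs_of_nonneg (Real.rpow_nonneg hv.1.le _)]
      apply mul_le_mul_of_nonneg_left _ (Real.rpow_nonneg hv.1.le _)
      rw [norm_mul]
      calc ‖deriv φ (t + (T - t) * v)‖ * ‖1 - v‖
          ≤ Md * 1 := by
            apply mul_le_mul (hMd _ hy) _ (norm_nonneg _)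
              (le_trans (norm_nonneg _) (hMd _ hy))
            rw [Real.norm_eq_abs, abs_of_nonneg (by linarith [hvo.2])]
            linarith [hvo.1]
        _ = Md := mul_one Md
  set C : ℝ := ‖1 / Real.Gamma (1 - α)‖ * (Mφ + T * (Md / (1 - α))) with hCdef
  have hDb : ∀ t ∈ Ioo (0:ℝ) T, ‖D t‖ ≤ C * (T - t) ^ (-α) := by
    intro t ht
    have hTt : 0 < T - t := by linarith [ht.2]
    have hk : (0:ℝ) ≤ (T - t) ^ (-α) := Real.rpow_nonneg hTt.le _
    have hsplit : (T - t) ^ (1 - α) = (T - t) * (T - t) ^ (-α) := by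
      rw [show (1:ℝ) - α = 1 + (-α) by ring, Real.rpow_add hTt, Real.rpow_one]
    have hJt := hJb t (Ioo_subset_Icc_self ht)
    have hJ1t := hJ1b t ht
    have e1 : ‖(T - t) ^ (1 - α) * J1 t‖ ≤ T * (Md / (1 - α)) * (T - t) ^ (-α) := by
      rw [norm_mul, Real.norm_eq_abs ((T - t) ^ (1 - α)),
        abs_of_nonneg (Real.rpow_nonneg hTt.le _), hsplit]
      calc (T - t) * (T - t) ^ (-α) * ‖J1 t‖
          ≤ T * (T - t) ^ (-α) * (Md / (1 - α)) := by
            apply mul_le_mul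
              (mul_le_mul_of_nonneg_right (by linarith [ht.1]) hk) hJ1t (norm_nonneg _)
              (mul_nonneg hT.le hk)
        _ = T * (Md / (1 - α)) * (T - t) ^ (-α) := by ring
    have e2 : ‖(1 - α) * (T - t) ^ (-α) * J t‖ ≤ Mφ * (T - t) ^ (-α) := by
      rw [norm_mul, norm_mul, Real.norm_eq_abs (1 - α), abs_of_nonneg h1α.le,
        Real.norm_eq_abs ((T - t) ^ (-α)), abs_of_nonneg hk]
      calc (1 - α) * (T - t) ^ (-α) * ‖J t‖
          ≤ (1 - α) * (T - t) ^ (-α) * (Mφ / (1 - α)) :=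
            mul_le_mul_of_nonneg_left hJt (mul_nonneg h1α.le hk)
        _ = Mφ * (T - t) ^ (-α) := by field_simp
    calc ‖D t‖ = ‖(1 / Real.Gamma (1 - α))‖ *
          ‖(T - t) ^ (1 - α) * J1 t - (1 - α) * (T - t) ^ (-α) * J t‖ := by
            rw [hDdef]; exact norm_mul _ _
      _ ≤ ‖(1 / Real.Gamma (1 - α))‖ *
          (‖(T - t) ^ (1 - α) * J1 t‖ + ‖(1 - α) * (T - t) ^ (-α) * J t‖) :=
            mul_le_mul_of_nonneg_left (norm_sub_le _ _) (norm_nonneg _)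
      _ ≤ ‖(1 / Real.Gamma (1 - α))‖ *
          (T * (Md / (1 - α)) * (T - t) ^ (-α) + Mφ * (T - t) ^ (-α)) :=
            mul_le_mul_of_nonneg_left (add_le_add e1 e2) (norm_nonneg _)
      _ = C * (T - t) ^ (-α) := by rw [hCdef]; ring
  -- integrability
  have hint1 : IntervalIntegrable (fun t => derivWithin ρ (Icc 0 T) t * I t) volume 0 T := by
    apply ContinuousOn.intervalIntegrable
    rw [uIcc_of_le hT.le]
    exact hdρc.mul hIcont
  have hint2 : IntervalIntegrable (fun t => ρ t * deriv I t) volume 0 T := by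
    rw [intervalIntegrable_iff_integrableOn_Ioc_of_le hT.le]
    apply Integrable.mono' (g := fun t => Mρ * C * (T - t) ^ (-α)) ?_ ?_ ?_
    · rw [← IntegrableOn, ← intervalIntegrable_iff_integrableOn_Ioc_of_le hT.le]
      exact (kernel_int2 α T 0 T hα1).const_mul (Mρ * C)
    · exact ((hρc.mono Ioc_subset_Icc_self).aestronglyMeasurable measurableSet_Ioc).mul
        (measurable_deriv I).aestronglyMeasurable
    · filter_upwards [Filter.Eventually.filter_mono (ae_mono Measure.restrict_le_self)
        (ae_ne' T), ae_restrict_mem measurableSet_Ioc] with t ht1 ht2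
      have hto : t ∈ Ioo (0:ℝ) T := ⟨ht2.1, lt_of_le_of_ne ht2.2 ht1⟩
      rw [norm_mul, hderivI_eq t hto]
      calc ‖ρ t‖ * ‖D t‖ ≤ Mρ * (C * (T - t) ^ (-α)) :=
            mul_le_mul (hMρ t ⟨hto.1.le, hto.2.le⟩) (hDb t hto) (norm_nonneg _) hMρ0
        _ = Mρ * C * (T - t) ^ (-α) := by ring
  -- FTC
  have ftc : ∫ t in (0:ℝ)..T, (derivWithin ρ (Icc 0 T) t * I t + ρ t * deriv I t)
      = ρ T * I T - ρ 0 * I 0 := by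
    apply intervalIntegral.integral_eq_sub_of_hasDeriv_right_of_le hT.le
      (hρc.mul hIcont) ?_ (hint1.add hint2)
    intro t ht
    have h := ((hρd t ht).mul (hIderiv t ht)).hasDerivWithinAt (s := Ioi t)
    have he : deriv ρ t * I t + ρ t * D t
        = derivWithin ρ (Icc 0 T) t * I t + ρ t * deriv I t := by
      rw [hdρ_eq t ht, hderivI_eq t ht]
    exact he ▸ h
  have ftc2 : (∫ t in (0:ℝ)..T, derivWithin ρ (Icc 0 T) t * I t)
      + ∫ t in (0:ℝ)..T, ρ t * deriv I t = -(ρ 0 * I 0) := by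
    rw [← intervalIntegral.integral_add hint1 hint2, ftc, hIT]
    ring
  -- rewrite the RHS
  have hRHS : (∫ t in (0:ℝ)..T, ρ t * backRLDeriv α T φ t)
      = - ∫ t in (0:ℝ)..T, ρ t * deriv I t := by
    rw [← intervalIntegral.integral_neg]
    apply intervalIntegral.integral_congr
    intro t _
    simp [backRLDeriv, ← hIdef, mul_neg]
  -- rewrite the LHS
  have hX : ∀ t ∈ Ioc (0:ℝ) T,
      (∫ s in (0:ℝ)..t, (t - s) ^ (-α) * deriv ρ s)
        = ∫ s in (0:ℝ)..t, (t - s) ^ (-α) * derivWithin ρ (Icc 0 T) s := by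
    intro t ht
    apply intervalIntegral.integral_congr_ae
    rw [uIoc_of_le ht.1.le]
    filter_upwards [ae_ne' t] with s hs1
    intro hs
    have hso : s ∈ Ioo (0:ℝ) T := ⟨hs.1, lt_of_lt_of_le (lt_of_le_of_ne hs.2 hs1) ht.2⟩
    rw [hdρ_eq s hso]
  have hLHS : ∫ t in (0:ℝ)..T, φ t * caputoDeriv α ρ t
      = ∫ s in (0:ℝ)..T, derivWithin ρ (Icc 0 T) s * I s := by
    calc ∫ t in (0:ℝ)..T, φ t * caputoDeriv α ρ t
        = ∫ t in (0:ℝ)..T, (1 / Real.Gamma (1 - α)) *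
            (φ t * ∫ s in (0:ℝ)..t, (t - s) ^ (-α) * deriv ρ s) := by
          apply intervalIntegral.integral_congr
          intro t _
          simp only [caputoDeriv]
          ring
      _ = (1 / Real.Gamma (1 - α)) * ∫ t in (0:ℝ)..T,
            φ t * ∫ s in (0:ℝ)..t, (t - s) ^ (-α) * deriv ρ s :=
          intervalIntegral.integral_const_mul _ _
      _ = (1 / Real.Gamma (1 - α)) * ∫ t in (0:ℝ)..T,
            φ t * ∫ s in (0:ℝ)..t, (t - s) ^ (-α) * derivWithin ρ (Icc 0 T) s := by
          congr 1
          rw [intervalIntegral.integral_of_le hT.le, intervalIntegral.integral_of_le hT.le]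
          apply setIntegral_congr_fun measurableSet_Ioc
          intro t ht
          show φ t * (∫ s in (0:ℝ)..t, (t - s) ^ (-α) * deriv ρ s)
            = φ t * ∫ s in (0:ℝ)..t, (t - s) ^ (-α) * derivWithin ρ (Icc 0 T) s
          rw [hX t ht]
      _ = (1 / Real.Gamma (1 - α)) * ∫ s in (0:ℝ)..T,
            derivWithin ρ (Icc 0 T) s * ∫ t in s..T, (t - s) ^ (-α) * φ t := by
          rw [fubini_tri hα0 hα1 hT hdρc hφc]
      _ = ∫ s in (0:ℝ)..T, derivWithin ρ (Icc 0 T) s * I s := by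
          rw [← intervalIntegral.integral_const_mul]
          apply intervalIntegral.integral_congr
          intro s _
          simp only [hIdef, backRLIntegral]
          ring
  rw [hLHS, hRHS]
  linarith [ftc2]
end

section
/- Exactness of the backward L1 scheme on step functions: with b_{k,n} := ((t_k − t_{n−1})^{1−α} − (t_{k−1} − t_{n−1})^{1−α})/(Γ(2−α)Δt), if φ is the right-continuous piecewise constant function with φ(s) = φ_k for s ∈ (t_{k−1}, t_k], then −(1/Δt)[ₜₙÎ_T^{1−α}φ − ₜ_{n−1}Î_T^{1−α}φ] = b_{n,n} φ_n + Σ_{k=n+1}^{N_t}(b_{k,n} − b_{k,n+1}) φ_k, where ₜÎ_T^{1−α}φ := (1/Γ(1−α)) ∫ₜ^T (s−t)^{−α} φ(s) ds. -/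
open MeasureTheory intervalIntegral Real

/-- L1 quadrature weights `b_{k,n}` with `t_j = j Δt`. -/
noncomputable def L1weight (α Δt : ℝ) (k n : ℕ) : ℝ :=
  (((k : ℝ) * Δt - ((n : ℝ) - 1) * Δt) ^ (1 - α)
      - (((k : ℝ) - 1) * Δt - ((n : ℝ) - 1) * Δt) ^ (1 - α)) / (Real.Gamma (2 - α) * Δt)

lemma kernel_intable (α t a b : ℝ) (hα : α < 1) :
    IntervalIntegrable (fun s => (s - t) ^ (-α)) volume a b := by
  have h : IntervalIntegrable (fun x : ℝ => x ^ (-α)) volume (a - t) (b - t) :=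
    intervalIntegral.intervalIntegrable_rpow' (by linarith)
  simpa using h.comp_sub_right t

lemma piece_integral (α Δt : ℝ) (hα0 : 0 < α) (hα1 : α < 1)
    (ck : ℝ) (φ : ℝ → ℝ) (a b t : ℝ) (hab : a ≤ b)
    (hc : ∀ s ∈ Set.Ioc a b, φ s = ck) :
    ∫ s in a..b, (s - t) ^ (-α) * φ s
      = ck * (((b - t) ^ (1 - α) - (a - t) ^ (1 - α)) / (1 - α)) := by
  rw [intervalIntegral.integral_of_le hab]
  have h1 : ∫ s in Set.Ioc a b, (s - t) ^ (-α) * φ s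
      = ∫ s in Set.Ioc a b, (s - t) ^ (-α) * ck := by
    apply setIntegral_congr_fun measurableSet_Ioc
    intro s hs
    simp only [hc s hs]
  rw [h1, ← intervalIntegral.integral_of_le hab]
  rw [intervalIntegral.integral_mul_const]
  have h2 : (∫ s in a..b, (s - t) ^ (-α))
      = ((b - t) ^ (1 - α) - (a - t) ^ (1 - α)) / (1 - α) := by
    have := intervalIntegral.integral_comp_sub_right (fun x : ℝ => x ^ (-α)) t (a := a) (b := b)
    rw [this, integral_rpow (Or.inl (by linarith : (-1 : ℝ) < -α))]
    have : -α + 1 = 1 - α := by ring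
    rw [this]
  rw [h2]; ring

lemma piece_intable (α Δt : ℝ) (hα1 : α < 1)
    (ck : ℝ) (φ : ℝ → ℝ) (a b t : ℝ) (hab : a ≤ b)
    (hc : ∀ s ∈ Set.Ioc a b, φ s = ck) :
    IntervalIntegrable (fun s => (s - t) ^ (-α) * φ s) volume a b := by
  rw [intervalIntegrable_iff, Set.uIoc_of_le hab]
  have h : IntegrableOn (fun s => (s - t) ^ (-α) * ck) (Set.Ioc a b) volume := by
    have := (kernel_intable α t a b hα1).mul_const ck
    rw [intervalIntegrable_iff, Set.uIoc_of_le hab] at this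
    exact this
  exact h.congr_fun (fun s hs => by rw [hc s hs]) measurableSet_Ioc

lemma total_integral (α Δt : ℝ) (hα0 : 0 < α) (hα1 : α < 1) (hΔt : 0 < Δt)
    (Nt : ℕ) (c : ℕ → ℝ) (φ : ℝ → ℝ)
    (hφ : ∀ k : ℕ, 1 ≤ k → k ≤ Nt →
      ∀ s ∈ Set.Ioc (((k : ℝ) - 1) * Δt) ((k : ℝ) * Δt), φ s = c k)
    (m : ℕ) (hm : m ≤ Nt) :
    ∫ s in ((m : ℝ) * Δt)..((Nt : ℝ) * Δt), (s - (m : ℝ) * Δt) ^ (-α) * φ s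
      = ∑ k ∈ Finset.Icc (m + 1) Nt, c k *
          ((((k : ℝ) * Δt - (m : ℝ) * Δt) ^ (1 - α)
            - (((k : ℝ) - 1) * Δt - (m : ℝ) * Δt) ^ (1 - α)) / (1 - α)) := by
  set t := (m : ℝ) * Δt with ht
  set a : ℕ → ℝ := fun i => ((m + i : ℕ) : ℝ) * Δt with ha
  have hstep : ∀ i : ℕ, a i ≤ a (i + 1) := by
    intro i
    apply mul_le_mul_of_nonneg_right _ hΔt.le
    exact_mod_cast Nat.le_succ_of_le (le_refl _) |>.trans (by push_cast; linarith)
  have hmono : ∀ i : ℕ, ((m + i : ℕ) : ℝ) ≤ ((m + (i+1) : ℕ) : ℝ) := by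
    intro i; exact_mod_cast Nat.le_succ _
  have key := intervalIntegral.sum_integral_adjacent_intervals
    (a := a) (μ := volume) (f := fun s => (s - t) ^ (-α) * φ s) (n := Nt - m) ?_
  · have ha0 : a 0 = t := by simp [ha, ht]
    have haN : a (Nt - m) = (Nt : ℝ) * Δt := by
      have hmn : m + (Nt - m) = Nt := by omega
      simp only [ha, hmn]
    rw [ha0, haN] at key
    rw [← key]
    rw [← Finset.Ico_add_one_right_eq_Icc, Finset.sum_Ico_eq_sum_range]
    have hrange : Nt + 1 - (m + 1) = Nt - m := by omega
    rw [hrange]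
    apply Finset.sum_congr rfl
    intro i hi
    have hi' : i < Nt - m := Finset.mem_range.mp hi
    have hcast : ((m + 1 + i : ℕ) : ℝ) = ((m + i : ℕ) : ℝ) + 1 := by push_cast; ring
    have hc : ∀ s ∈ Set.Ioc (a i) (a (i + 1)), φ s = c (m + 1 + i) := by
      intro s hs
      apply hφ (m + 1 + i) (by omega) (by omega)
      have h1 : ((m + 1 + i : ℕ) : ℝ) - 1 = ((m + i : ℕ) : ℝ) := by push_cast; ring
      have h2 : ((m + 1 + i : ℕ) : ℝ) = ((m + (i + 1) : ℕ) : ℝ) := by push_cast; ring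
      rw [h1, h2]
      exact hs
    rw [piece_integral α Δt hα0 hα1 (c (m + 1 + i)) φ (a i) (a (i+1)) t (hstep i) hc]
    have e1 : a (i + 1) = ((m + 1 + i : ℕ) : ℝ) * Δt := by
      simp only [ha]; push_cast; ring
    have e2 : a i = (((m + 1 + i : ℕ) : ℝ) - 1) * Δt := by
      simp only [ha, hcast]; ring
    rw [e1, e2]
  · intro i hi'
    have hc : ∀ s ∈ Set.Ioc (a i) (a (i + 1)), φ s = c (m + 1 + i) := by
      intro s hs
      apply hφ (m + 1 + i) (by omega) (by omega)
      have h1 : ((m + 1 + i : ℕ) : ℝ) - 1 = ((m + i : ℕ) : ℝ) := by push_cast; ring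
      have h2 : ((m + 1 + i : ℕ) : ℝ) = ((m + (i + 1) : ℕ) : ℝ) := by push_cast; ring
      rw [h1, h2]; exact hs
    exact piece_intable α Δt hα1 (c (m + 1 + i)) φ (a i) (a (i+1)) t (hstep i) hc

theorem backward_L1_exact_on_step_functions
    (α T : ℝ) (hα0 : 0 < α) (hα1 : α < 1) (hT : 0 < T)
    (Nt : ℕ) (hNt : 1 ≤ Nt) (Δt : ℝ) (hΔt : Δt = T / Nt)
    (c : ℕ → ℝ) (φ : ℝ → ℝ)
    (hφ : ∀ k : ℕ, 1 ≤ k → k ≤ Nt →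
      ∀ s ∈ Set.Ioc (((k : ℝ) - 1) * Δt) ((k : ℝ) * Δt), φ s = c k) :
    ∀ n : ℕ, 1 ≤ n → n ≤ Nt →
      -(1 / Δt) * (backRLIntegral α T φ ((n : ℝ) * Δt)
          - backRLIntegral α T φ (((n : ℝ) - 1) * Δt))
        = L1weight α Δt n n * c n
          + ∑ k ∈ Finset.Icc (n + 1) Nt,
              (L1weight α Δt k n - L1weight α Δt k (n + 1)) * c k := by
  intro n hn1 hnN
  have hNtpos : (0:ℝ) < (Nt : ℝ) := by exact_mod_cast hNt
  have hΔt0 : 0 < Δt := by rw [hΔt]; positivity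
  have hΔne : Δt ≠ 0 := ne_of_gt hΔt0
  have hG : 0 < Real.Gamma (1 - α) := Real.Gamma_pos_of_pos (by linarith)
  have hGne : Real.Gamma (1 - α) ≠ 0 := ne_of_gt hG
  have h1α : (1:ℝ) - α ≠ 0 := by linarith
  have hΓ2 : Real.Gamma (2 - α) = (1 - α) * Real.Gamma (1 - α) := by
    rw [show (2:ℝ) - α = (1 - α) + 1 by ring, Real.Gamma_add_one (by linarith)]
  have hTN : T = (Nt:ℝ) * Δt := by rw [hΔt]; field_simp
  have hcast : ((n - 1 : ℕ) : ℝ) = (n:ℝ) - 1 := by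
    have := Nat.cast_sub (R := ℝ) hn1; simpa using this
  have I1 : backRLIntegral α T φ ((n:ℝ) * Δt)
      = (1 / Real.Gamma (1 - α)) * ∑ k ∈ Finset.Icc (n+1) Nt, c k *
          ((((k:ℝ)*Δt - (n:ℝ)*Δt)^(1-α) - (((k:ℝ)-1)*Δt - (n:ℝ)*Δt)^(1-α)) / (1-α)) := by
    simp only [backRLIntegral]
    rw [hTN, total_integral α Δt hα0 hα1 hΔt0 Nt c φ hφ n hnN]
  have I0 : backRLIntegral α T φ (((n:ℝ)-1) * Δt)
      = (1 / Real.Gamma (1 - α)) *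
          (c n * ((((n:ℝ)*Δt - ((n:ℝ)-1)*Δt)^(1-α)
              - (((n:ℝ)-1)*Δt - ((n:ℝ)-1)*Δt)^(1-α)) / (1-α))
          + ∑ k ∈ Finset.Icc (n+1) Nt, c k *
            ((((k:ℝ)*Δt - ((n:ℝ)-1)*Δt)^(1-α)
              - (((k:ℝ)-1)*Δt - ((n:ℝ)-1)*Δt)^(1-α)) / (1-α))) := by
    simp only [backRLIntegral]
    rw [hTN, ← hcast, total_integral α Δt hα0 hα1 hΔt0 Nt c φ hφ (n-1) (by omega)]
    rw [show n - 1 + 1 = n from by omega, hcast]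
    have hsplit : Finset.Icc n Nt = insert n (Finset.Icc (n+1) Nt) := by
      rw [Finset.Icc_add_one_left_eq_Ioc, Finset.Ioc_insert_left hnN]
    rw [hsplit, Finset.sum_insert (by simp)]
  have hterm_n : L1weight α Δt n n * c n
      = (1/(Δt * Real.Gamma (1-α))) * (c n * ((((n:ℝ)*Δt - ((n:ℝ)-1)*Δt)^(1-α)
          - (((n:ℝ)-1)*Δt - ((n:ℝ)-1)*Δt)^(1-α)) / (1-α))) := by
    simp only [L1weight, hΓ2]
    field_simp
  have hterm : ∀ k ∈ Finset.Icc (n+1) Nt,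
      (L1weight α Δt k n - L1weight α Δt k (n+1)) * c k
      = (1/(Δt * Real.Gamma (1-α))) * (c k * ((((k:ℝ)*Δt - ((n:ℝ)-1)*Δt)^(1-α)
            - (((k:ℝ)-1)*Δt - ((n:ℝ)-1)*Δt)^(1-α)) / (1-α)))
        - (1/(Δt * Real.Gamma (1-α))) * (c k * ((((k:ℝ)*Δt - (n:ℝ)*Δt)^(1-α)
            - (((k:ℝ)-1)*Δt - (n:ℝ)*Δt)^(1-α)) / (1-α))) := by
    intro k _
    simp only [L1weight, hΓ2]
    push_cast
    rw [show (n:ℝ) + 1 - 1 = (n:ℝ) from by ring]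
    field_simp
  rw [I1, I0, hterm_n, Finset.sum_congr rfl hterm, Finset.sum_sub_distrib,
    ← Finset.mul_sum, ← Finset.mul_sum]
  ring
end
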